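/- Let u be a classical solution of problem (B) on [-1,1]×[0,T] with initial data u0 satisfying u0(x) ≥ 1 for all x ∈ [-1,1]. Then for all x ∈ [-1,1] and t ∈ [0,T]: u(x,t) ≥ φ(x;1) + (π/4)·t + 1 − φ(1;1), where φ(x;1) := −(4/π)·ln(cos(πx/4)). In particular u(x,t) ≥ (π/4)·t − C1 with C1 := φ(1;1) − 1 = (2/π)·ln 2 − 1. -/

import Mathlib

open Real

/-- Partial derivative in `x` of a function `u(x,t)`. -/
noncomputable def ux (u : ℝ → ℝ → ℝ) (x t : ℝ) : ℝ := deriv (fun y => u y t) x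

/-- Second partial derivative in `x` of a function `u(x,t)`. -/
noncomputable def uxx (u : ℝ → ℝ → ℝ) (x t : ℝ) : ℝ := deriv (fun y => ux u y t) x

/-- Partial derivative in `t` of a function `u(x,t)`. -/
noncomputable def ut (u : ℝ → ℝ → ℝ) (x t : ℝ) : ℝ := deriv (fun s => u x s) t

/-- A classical solution of problem (B) on `[-1,1] × [0,T]` with initial data `u0`:
`u` and `u_x` are continuous on the closed rectangle, `u` is `C^{2,1}` in
`(-1,1) × (0,T]` where it satisfies `u_t = u_xx/(1+u_x²)`, with boundary
conditions `u_x(±1,t) = ±u(±1,t)` and initial condition `u(·,0) = u0`. -/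
def IsClassicalSolB (u : ℝ → ℝ → ℝ) (u0 : ℝ → ℝ) (T : ℝ) : Prop :=
  ContinuousOn (fun p : ℝ × ℝ => u p.1 p.2) (Set.Icc (-1 : ℝ) 1 ×ˢ Set.Icc (0 : ℝ) T) ∧
  ContinuousOn (fun p : ℝ × ℝ => ux u p.1 p.2) (Set.Icc (-1 : ℝ) 1 ×ˢ Set.Icc (0 : ℝ) T) ∧
  (∀ t ∈ Set.Ioc (0 : ℝ) T, ∀ x ∈ Set.Ioo (-1 : ℝ) 1,
    DifferentiableAt ℝ (fun y => u y t) x ∧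
    DifferentiableAt ℝ (fun y => ux u y t) x ∧
    DifferentiableAt ℝ (fun s => u x s) t ∧
    ut u x t = uxx u x t / (1 + ux u x t ^ 2)) ∧
  (∀ t ∈ Set.Ioc (0 : ℝ) T, ux u 1 t = u 1 t ∧ ux u (-1) t = - u (-1) t) ∧
  (∀ x ∈ Set.Icc (-1 : ℝ) 1, u x 0 = u0 x)

/-- lower bound. If `u` is a classical solution of (B) on
`[-1,1] × [0,T]` with `u0 ≥ 1`, then
`u(x,t) ≥ φ(x;1) + (π/4)t + 1 − φ(1;1)` where `φ(x;1) = -(4/π)·ln(cos(πx/4))`,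
and in particular `u(x,t) ≥ (π/4)t − C₁` with `C₁ = (2/π)·ln 2 − 1`. -/

noncomputable def phif (x : ℝ) : ℝ := -(4 / π) * Real.log (Real.cos (π * x / 4))

lemma cos_pos_aux {x : ℝ} (hx : x ∈ Set.Icc (-1:ℝ) 1) : 0 < Real.cos (π * x / 4) := by
  have hπ := Real.pi_pos
  apply Real.cos_pos_of_mem_Ioo
  rw [Set.mem_Ioo]
  constructor
  · nlinarith [hx.1]
  · nlinarith [hx.2]

lemma phi_hasDerivAt {x : ℝ} (hc : 0 < Real.cos (π * x / 4)) :
    HasDerivAt phif (Real.tan (π * x / 4)) x := by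
  have hπ := Real.pi_pos
  have h1 : HasDerivAt (fun y : ℝ => π * y / 4) (π / 4) x := by
    simpa using ((hasDerivAt_id x).const_mul π).div_const 4
  have h2 : HasDerivAt (fun y : ℝ => Real.cos (π * y / 4)) (-Real.sin (π * x / 4) * (π / 4)) x :=
    by have := (Real.hasDerivAt_cos (π * x / 4)).comp x h1; exact this
  have h3 : HasDerivAt (fun y : ℝ => Real.log (Real.cos (π * y / 4)))
      ((Real.cos (π * x / 4))⁻¹ * (-Real.sin (π * x / 4) * (π / 4))) x :=
    by have := (Real.hasDerivAt_log (ne_of_gt hc)).comp x h2; exact this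
  have h4 := h3.const_mul (-(4 / π))
  refine h4.congr_deriv ?_
  rw [Real.tan_eq_sin_div_cos]
  field_simp

lemma tan_hasDerivAt {x : ℝ} (hc : 0 < Real.cos (π * x / 4)) :
    HasDerivAt (fun y : ℝ => Real.tan (π * y / 4))
      ((π / 4) * (1 + Real.tan (π * x / 4) ^ 2)) x := by
  have h1 : HasDerivAt (fun y : ℝ => π * y / 4) (π / 4) x := by
    simpa using ((hasDerivAt_id x).const_mul π).div_const 4
  have h2 := (Real.hasDerivAt_tan (ne_of_gt hc)).comp x h1
  refine h2.congr_deriv ?_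
  have h3 : (1 + Real.tan (π * x / 4) ^ 2)⁻¹ = Real.cos (π * x / 4) ^ 2 :=
    Real.inv_one_add_tan_sq (ne_of_gt hc)
  have h4 : Real.cos (π * x / 4) ^ 2 ≠ 0 := pow_ne_zero 2 (ne_of_gt hc)
  have h5 : (1 + Real.tan (π * x / 4) ^ 2) = 1 / Real.cos (π * x / 4) ^ 2 := by
    rw [← h3, one_div, inv_inv]
  rw [h5]; ring



lemma phi_le {x : ℝ} (hx : x ∈ Set.Icc (-1:ℝ) 1) : phif x ≤ phif 1 := by
  have hπ := Real.pi_pos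
  have h1 : Real.cos (π * 1 / 4) ≤ Real.cos (π * x / 4) := by
    rw [← Real.cos_abs (π * x / 4)]
    apply Real.cos_le_cos_of_nonneg_of_le_pi (abs_nonneg _)
    · nlinarith
    · rw [abs_le]
      constructor <;> nlinarith [hx.1, hx.2]
  have h2 : Real.log (Real.cos (π * 1 / 4)) ≤ Real.log (Real.cos (π * x / 4)) :=
    Real.log_le_log (cos_pos_aux (by norm_num)) h1
  have h3 : -(4 / π) ≤ 0 := neg_nonpos.2 (by positivity)
  exact mul_le_mul_of_nonpos_left h2 h3

lemma phi_nonneg {x : ℝ} (hx : x ∈ Set.Icc (-1:ℝ) 1) : 0 ≤ phif x := by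
  have h1 : Real.log (Real.cos (π * x / 4)) ≤ 0 :=
    Real.log_nonpos (le_of_lt (cos_pos_aux hx)) (Real.cos_le_one _)
  have h3 : -(4 / π) ≤ 0 := neg_nonpos.2 (by positivity)
  rw [phif]; nlinarith [mul_nonneg (neg_nonneg.2 h3) (neg_nonneg.2 h1)]

lemma phi_one : phif 1 = (2 / π) * Real.log 2 := by
  have hπ := Real.pi_pos
  have h1 : π * 1 / 4 = π / 4 := by ring
  rw [phif, h1, Real.cos_pi_div_four]
  have h2 : Real.log (Real.sqrt 2 / 2) = -(Real.log 2 / 2) := by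
    rw [Real.log_div (by positivity) (by norm_num), Real.log_sqrt (by norm_num)]
    ring
  rw [h2]
  field_simp
  ring

lemma phi_symm : phif (-1) = phif 1 := by
  have : π * (-1) / 4 = -(π * 1 / 4) := by ring
  rw [phif, phif, this, Real.cos_neg]

lemma tan_bounds {x : ℝ} (hx : x ∈ Set.Icc (-1:ℝ) 1) :
    -1 ≤ Real.tan (π * x / 4) ∧ Real.tan (π * x / 4) ≤ 1 := by
  have hπ := Real.pi_pos
  have hmem : ∀ y : ℝ, y ∈ Set.Icc (-1:ℝ) 1 → π * y / 4 ∈ Set.Ioo (-(π/2)) (π/2) := by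
    intro y hy
    rw [Set.mem_Ioo]
    exact ⟨by nlinarith [hy.1], by nlinarith [hy.2]⟩
  have hmono := Real.strictMonoOn_tan
  have h1 : Real.tan (π * x / 4) ≤ Real.tan (π * 1 / 4) := by
    rcases eq_or_lt_of_le hx.2 with h | h
    · rw [h]
    · exact le_of_lt (hmono (hmem x hx) (hmem 1 (by norm_num)) (by nlinarith))
  have h2 : Real.tan (π * (-1) / 4) ≤ Real.tan (π * x / 4) := by
    rcases eq_or_lt_of_le hx.1 with h | h
    · rw [← h]
    · exact le_of_lt (hmono (hmem (-1) (by norm_num)) (hmem x hx) (by nlinarith))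
  have e1 : π * 1 / 4 = π / 4 := by ring
  have e2 : π * (-1) / 4 = -(π / 4) := by ring
  rw [e1, Real.tan_pi_div_four] at h1
  rw [e2, Real.tan_neg, Real.tan_pi_div_four] at h2
  exact ⟨h2, h1⟩


lemma le_zero_of_tendsto_frequently {g : ℝ → ℝ} {l : Filter ℝ} [l.NeBot] {L : ℝ}
    (hg : Filter.Tendsto g l (nhds L)) (h : ∃ᶠ x in l, g x ≤ 0) : L ≤ 0 := by
  by_contra hL
  push_neg at hL
  have hev : ∀ᶠ x in l, 0 < g x := hg (Ioi_mem_nhds hL)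
  obtain ⟨x, h1, h2⟩ := (h.and_eventually hev).exists
  linarith

lemma zero_le_of_tendsto_frequently {g : ℝ → ℝ} {l : Filter ℝ} [l.NeBot] {L : ℝ}
    (hg : Filter.Tendsto g l (nhds L)) (h : ∃ᶠ x in l, 0 ≤ g x) : 0 ≤ L := by
  by_contra hL
  push_neg at hL
  have hev : ∀ᶠ x in l, g x < 0 := hg (Iio_mem_nhds hL)
  obtain ⟨x, h1, h2⟩ := (h.and_eventually hev).exists
  linarith

lemma neBot_Ioo_left {a b : ℝ} (hab : a < b) : (nhdsWithin a (Set.Ioo a b)).NeBot := by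
  rw [← mem_closure_iff_nhdsWithin_neBot, closure_Ioo (ne_of_lt hab)]
  exact ⟨le_refl a, le_of_lt hab⟩

lemma neBot_Ioo_right {a b : ℝ} (hab : a < b) : (nhdsWithin b (Set.Ioo a b)).NeBot := by
  rw [← mem_closure_iff_nhdsWithin_neBot, closure_Ioo (ne_of_lt hab)]
  exact ⟨le_of_lt hab, le_refl b⟩

/-- if min of g on [a,b] is at b, limit of derivative at b is ≤ 0 -/
lemma endpoint_right {g G : ℝ → ℝ} {a b : ℝ} (hab : a < b)
    (hg : ContinuousOn g (Set.Icc a b)) (hG : ContinuousOn G (Set.Icc a b))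
    (hd : ∀ x ∈ Set.Ioo a b, HasDerivAt g (G x) x)
    (hmin : ∀ x ∈ Set.Icc a b, g b ≤ g x) : G b ≤ 0 := by
  have hne : (nhdsWithin b (Set.Ioo a b)).NeBot := neBot_Ioo_right hab
  have hfreq : ∃ᶠ x in nhdsWithin b (Set.Ioo a b), G x ≤ 0 := by
    rw [Filter.frequently_iff]
    intro s hs
    rw [mem_nhdsWithin] at hs
    obtain ⟨U, hU, hbU, hUs⟩ := hs
    obtain ⟨δ, hδ, hball⟩ := Metric.mem_nhds_iff.1 (hU.mem_nhds hbU)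
    set a' := max a (b - δ/2) with ha'
    have ha'b : a' < b := by
      apply max_lt hab; linarith
    obtain ⟨c, hc, hceq⟩ := exists_hasDerivAt_eq_slope g G ha'b
      (hg.mono (Set.Icc_subset_Icc (le_max_left _ _) (le_refl _)))
      (fun x hx => hd x ⟨lt_of_le_of_lt (le_max_left _ _) hx.1, hx.2⟩)
    have hcIoo : c ∈ Set.Ioo a b := ⟨lt_of_le_of_lt (le_max_left _ _) hc.1, hc.2⟩
    have hcU : c ∈ U := by
      apply hball
      rw [Metric.mem_ball, Real.dist_eq, abs_lt]
      constructor
      · have := hc.1; have := le_max_right a (b - δ/2); nlinarith [hc.2]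
      · nlinarith [hc.1, hc.2]
    refine ⟨c, hUs ⟨hcU, hcIoo⟩, ?_⟩
    rw [hceq]
    apply div_nonpos_of_nonpos_of_nonneg
    · have := hmin a' ⟨le_max_left _ _, le_of_lt ha'b⟩; linarith
    · linarith
  have htend : Filter.Tendsto G (nhdsWithin b (Set.Ioo a b)) (nhds (G b)) :=
    (hG.continuousWithinAt ⟨le_of_lt hab, le_refl b⟩).mono_left
      (nhdsWithin_mono _ Set.Ioo_subset_Icc_self)
  exact le_zero_of_tendsto_frequently htend hfreq

/-- if min of g on [a,b] is at a, limit of derivative at a is ≥ 0 -/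
lemma endpoint_left {g G : ℝ → ℝ} {a b : ℝ} (hab : a < b)
    (hg : ContinuousOn g (Set.Icc a b)) (hG : ContinuousOn G (Set.Icc a b))
    (hd : ∀ x ∈ Set.Ioo a b, HasDerivAt g (G x) x)
    (hmin : ∀ x ∈ Set.Icc a b, g a ≤ g x) : 0 ≤ G a := by
  have hne : (nhdsWithin a (Set.Ioo a b)).NeBot := neBot_Ioo_left hab
  have hfreq : ∃ᶠ x in nhdsWithin a (Set.Ioo a b), 0 ≤ G x := by
    rw [Filter.frequently_iff]
    intro s hs
    rw [mem_nhdsWithin] at hs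
    obtain ⟨U, hU, haU, hUs⟩ := hs
    obtain ⟨δ, hδ, hball⟩ := Metric.mem_nhds_iff.1 (hU.mem_nhds haU)
    set b' := min b (a + δ/2) with hb'
    have hab' : a < b' := by
      apply lt_min hab; linarith
    obtain ⟨c, hc, hceq⟩ := exists_hasDerivAt_eq_slope g G hab'
      (hg.mono (Set.Icc_subset_Icc (le_refl _) (min_le_left _ _)))
      (fun x hx => hd x ⟨hx.1, lt_of_lt_of_le hx.2 (min_le_left _ _)⟩)
    have hcIoo : c ∈ Set.Ioo a b := ⟨hc.1, lt_of_lt_of_le hc.2 (min_le_left _ _)⟩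
    have hcU : c ∈ U := by
      apply hball
      rw [Metric.mem_ball, Real.dist_eq, abs_lt]
      constructor
      · nlinarith [hc.1, hc.2]
      · have := min_le_right b (a + δ/2); nlinarith [hc.2, hc.1]
    refine ⟨c, hUs ⟨hcU, hcIoo⟩, ?_⟩
    rw [hceq]
    apply div_nonneg
    · have := hmin b' ⟨le_of_lt hab', min_le_left _ _⟩; linarith
    · linarith
  have htend : Filter.Tendsto G (nhdsWithin a (Set.Ioo a b)) (nhds (G a)) :=
    (hG.continuousWithinAt ⟨le_refl a, le_of_lt hab⟩).mono_left
      (nhdsWithin_mono _ Set.Ioo_subset_Icc_self)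
  exact zero_le_of_tendsto_frequently htend hfreq

/-- second derivative test at interior min (right side version) -/
lemma second_deriv_nonneg {g G : ℝ → ℝ} {x0 b L : ℝ} (hx0b : x0 < b)
    (hg : ContinuousOn g (Set.Icc x0 b)) (hd : ∀ x ∈ Set.Ioo x0 b, HasDerivAt g (G x) x)
    (hG : HasDerivAt G L x0) (hG0 : G x0 = 0)
    (hmin : ∀ x ∈ Set.Icc x0 b, g x0 ≤ g x) : 0 ≤ L := by
  have hne : (nhdsWithin x0 (Set.Ioo x0 b)).NeBot := neBot_Ioo_left hx0b
  have hfreq : ∃ᶠ x in nhdsWithin x0 (Set.Ioo x0 b), 0 ≤ G x := by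
    rw [Filter.frequently_iff]
    intro s hs
    rw [mem_nhdsWithin] at hs
    obtain ⟨U, hU, haU, hUs⟩ := hs
    obtain ⟨δ, hδ, hball⟩ := Metric.mem_nhds_iff.1 (hU.mem_nhds haU)
    set b' := min b (x0 + δ/2) with hb'
    have hab' : x0 < b' := by
      apply lt_min hx0b; linarith
    obtain ⟨c, hc, hceq⟩ := exists_hasDerivAt_eq_slope g G hab'
      (hg.mono (Set.Icc_subset_Icc (le_refl _) (min_le_left _ _)))
      (fun x hx => hd x ⟨hx.1, lt_of_lt_of_le hx.2 (min_le_left _ _)⟩)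
    have hcIoo : c ∈ Set.Ioo x0 b := ⟨hc.1, lt_of_lt_of_le hc.2 (min_le_left _ _)⟩
    have hcU : c ∈ U := by
      apply hball
      rw [Metric.mem_ball, Real.dist_eq, abs_lt]
      constructor
      · nlinarith [hc.1, hc.2]
      · have := min_le_right b (x0 + δ/2); nlinarith [hc.2, hc.1]
    refine ⟨c, hUs ⟨hcU, hcIoo⟩, ?_⟩
    rw [hceq]
    apply div_nonneg
    · have := hmin b' ⟨le_of_lt hab', min_le_left _ _⟩; linarith
    · linarith
  have hslope : Filter.Tendsto (slope G x0) (nhdsWithin x0 (Set.Ioo x0 b)) (nhds L) := by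
    apply (hasDerivAt_iff_tendsto_slope.1 hG).mono_left
    apply nhdsWithin_mono
    intro x hx
    exact ne_of_gt hx.1
  have hfreq2 : ∃ᶠ x in nhdsWithin x0 (Set.Ioo x0 b), 0 ≤ slope G x0 x := by
    apply hfreq.mp
    filter_upwards [self_mem_nhdsWithin] with x hx hGx
    rw [slope_def_field, hG0]
    apply div_nonneg (by linarith) (by linarith [hx.1])
  exact zero_le_of_tendsto_frequently hslope hfreq2

/-- derivative at a right-endpoint minimum in time -/
lemma deriv_nonpos_at_right_min {f : ℝ → ℝ} {t0 L : ℝ} (h0 : 0 < t0)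
    (hf : HasDerivAt f L t0) (hmin : ∀ t ∈ Set.Ioo (0:ℝ) t0, f t0 ≤ f t) : L ≤ 0 := by
  have hne : (nhdsWithin t0 (Set.Ioo 0 t0)).NeBot := neBot_Ioo_right h0
  have hslope : Filter.Tendsto (slope f t0) (nhdsWithin t0 (Set.Ioo 0 t0)) (nhds L) := by
    apply (hasDerivAt_iff_tendsto_slope.1 hf).mono_left
    apply nhdsWithin_mono
    intro x hx
    exact ne_of_lt hx.2
  have hev : ∀ᶠ x in nhdsWithin t0 (Set.Ioo 0 t0), slope f t0 x ≤ 0 := by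
    filter_upwards [self_mem_nhdsWithin] with x hx
    rw [slope_def_field]
    apply div_nonpos_of_nonneg_of_nonpos
    · linarith [hmin x hx]
    · linarith [hx.2]
  exact le_of_tendsto hslope hev

set_option maxHeartbeats 1000000 in
lemma interior_algebra (P p q m x0 ε : ℝ) (hx0sq : x0^2 ≤ 1) (hmneg : m < 0) (hε : 0 < ε)
    (hq2 : q^2 ≤ 1)
    (e1' : (p - q) * (3 - x0^2) = m * (2*x0))
    (e2 : 0 ≤ (P - (π/4)*(1+q^2)) * (3 - x0^2) + (p - q)*(-(2*x0))*2 + m*(-2))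
    (e3 : P ≤ (π/4 - ε + 6*m) * (1 + p^2)) : False := by
  have hπ := Real.pi_pos
  have hψpos : (0:ℝ) < 3 - x0^2 := by nlinarith
  -- step A
  have e1sq : ((p - q) * (3 - x0^2))^2 = (m * (2*x0))^2 := by rw [e1']
  have hpq2 : (p - q)^2 ≤ m^2 := by
    nlinarith [e1sq, hx0sq, sq_nonneg (p - q), sq_nonneg m,
      mul_nonneg (sq_nonneg (p - q)) (show (0:ℝ) ≤ (3 - x0^2)^2 - 4 by nlinarith)]
  -- step B
  have hsub : (p - q)*(-(2*x0))*2*(3 - x0^2) = -8*x0^2*m := by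
    linear_combination (-4*x0) * e1'
  have b1 : 0 ≤ (P - (π/4)*(1+q^2))*(3 - x0^2)^2 - 8*x0^2*m - 2*m*(3 - x0^2) := by
    have hb0 := mul_nonneg e2 (le_of_lt hψpos)
    linarith [hb0, hsub]
  have hPQ : 3*m ≤ P - (π/4)*(1+q^2) := by
    by_contra h
    push_neg at h
    have hrr : (0:ℝ) ≤ (1 - x0^2)*(7 - x0^2) := by nlinarith
    have hmr : 0 ≤ (-m) * ((1 - x0^2)*(7 - x0^2)) :=
      mul_nonneg (by linarith) hrr
    have hA : (P - (π/4)*(1+q^2) - 3*m) * ((3 - x0^2)*(3 - x0^2)) < 0 :=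
      mul_neg_of_neg_of_pos (by linarith) (mul_pos hψpos hψpos)
    linarith [b1, hA, hmr]
  -- step C
  have habsp : |p - q| ≤ -m := by
    have h1 : (p - q)^2 ≤ (-m)^2 := by rw [neg_pow]; simpa using hpq2
    have h2 := abs_le_of_sq_le_sq' h1 (by linarith)
    rw [abs_le]
    exact h2
  have habsq : |q| ≤ 1 := by
    have h2 := abs_le_of_sq_le_sq' (show q^2 ≤ (1:ℝ)^2 by nlinarith [hq2]) (by norm_num)
    rw [abs_le]
    exact h2
  have hXY : (p - q)*(p + q) ≤ (-m)*(|p| + 1) := by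
    calc (p - q)*(p + q) ≤ |(p - q)*(p + q)| := le_abs_self _
    _ = |p - q| * |p + q| := abs_mul _ _
    _ ≤ (-m) * (|p| + 1) := by
        apply mul_le_mul habsp _ (abs_nonneg _) (by linarith)
        calc |p + q| ≤ |p| + |q| := abs_add_le _ _
        _ ≤ |p| + 1 := by linarith
  have hπ4 : π/4 ≤ 1 := by nlinarith [Real.pi_le_four]
  have hXY' : (π/4)*((p - q)*(p + q)) ≤ (-m)*(|p| + 1) := by
    rcases le_or_gt ((p - q)*(p + q)) 0 with h | h
    · have h11 : (π/4)*((p - q)*(p + q)) ≤ 0 :=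
        mul_nonpos_of_nonneg_of_nonpos (by positivity) h
      have h12 : 0 ≤ (-m)*(|p| + 1) :=
        mul_nonneg (by linarith) (by positivity)
      linarith
    · nlinarith [hXY]
  have hbr : (0:ℝ) < 2 + 6*p^2 - |p| := by
    nlinarith [sq_abs p, sq_nonneg (12*|p| - 1), abs_nonneg p]
  have hbrm : m * (2 + 6*p^2 - |p|) < 0 := mul_neg_of_neg_of_pos hmneg hbr
  nlinarith [e3, hPQ, hXY', hbrm, mul_nonneg (le_of_lt hε) (sq_nonneg p), sq_abs p]

set_option maxHeartbeats 2000000 in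
private lemma key (T : ℝ) (hT : 0 < T) (u0 : ℝ → ℝ)
    (hu0 : ∀ x ∈ Set.Icc (-1 : ℝ) 1, 1 ≤ u0 x)
    (u : ℝ → ℝ → ℝ) (hu : IsClassicalSolB u u0 T)
    (ε : ℝ) (hε : 0 < ε) (hε4 : ε < π / 4) :
    ∀ x ∈ Set.Icc (-1:ℝ) 1, ∀ t ∈ Set.Icc (0:ℝ) T,
      0 ≤ u x t - phif x - (π/4)*t - 1 + phif 1 + ε*t := by
  obtain ⟨hc, hcx, hpde, hbc, hinit⟩ := hu
  have hπ := Real.pi_pos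
  set K : Set (ℝ × ℝ) := Set.Icc (-1:ℝ) 1 ×ˢ Set.Icc (0:ℝ) T with hK
  let Z : ℝ → ℝ → ℝ := fun x t => u x t - phif x - (π/4)*t - 1 + phif 1 + ε*t
  let W : ℝ × ℝ → ℝ := fun p => Z p.1 p.2 * (3 - p.1^2) * Real.exp (-(6*p.2))
  suffices hsuff : ∀ p ∈ K, 0 ≤ W p by
    intro x hx t ht
    have h0 := hsuff (x, t) ⟨hx, ht⟩
    have h1 : 0 < (3 - x^2) * Real.exp (-(6*t)) := by
      apply mul_pos _ (Real.exp_pos _)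
      nlinarith [hx.1, hx.2]
    by_contra hcon
    push_neg at hcon
    have h2 : Z x t * ((3 - x^2) * Real.exp (-(6*t))) < 0 :=
      mul_neg_of_neg_of_pos hcon h1
    have h3 : W (x, t) = Z x t * ((3 - x^2) * Real.exp (-(6*t))) := by
      show Z x t * (3 - x^2) * Real.exp (-(6*t)) = _
      ring
    rw [h3] at h0
    linarith
  -- continuity of W on K
  have hphic : ContinuousOn phif (Set.Icc (-1:ℝ) 1) := fun x hx =>
    (phi_hasDerivAt (cos_pos_aux hx)).continuousAt.continuousWithinAt
  have hfst : ∀ p ∈ K, p.1 ∈ Set.Icc (-1:ℝ) 1 := fun p hp => hp.1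
  have hZpcont : ContinuousOn (fun p : ℝ × ℝ => Z p.1 p.2) K :=
    ((((hc.sub (hphic.comp continuous_fst.continuousOn hfst)).sub
      ((continuous_const.mul continuous_snd).continuousOn)).sub
      continuousOn_const).add continuousOn_const).add
      ((continuous_const.mul continuous_snd).continuousOn)
  have hWcont : ContinuousOn W K :=
    (hZpcont.mul ((continuous_const.sub (continuous_fst.pow 2)).continuousOn)).mul
      ((Real.continuous_exp.comp (continuous_const.mul continuous_snd).neg).continuousOn)
  by_contra hcon
  push_neg at hcon
  obtain ⟨p0, hp0K, hp0⟩ := hcon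
  have hKc : IsCompact K := isCompact_Icc.prod isCompact_Icc
  obtain ⟨q0, hq0K, hq0min⟩ := hKc.exists_isMinOn ⟨p0, hp0K⟩ hWcont
  have hqmin : ∀ p ∈ K, W q0 ≤ W p := fun p hp => hq0min hp
  have hqneg : W q0 < 0 := lt_of_le_of_lt (hqmin p0 hp0K) hp0
  obtain ⟨x0, t0⟩ := q0
  have hx0 : x0 ∈ Set.Icc (-1:ℝ) 1 := hq0K.1
  have ht0 : t0 ∈ Set.Icc (0:ℝ) T := hq0K.2
  have hx0sq : x0^2 ≤ 1 := by nlinarith [hx0.1, hx0.2]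
  have hψpos : (0:ℝ) < 3 - x0^2 := by nlinarith
  have hEpos : (0:ℝ) < Real.exp (-(6*t0)) := Real.exp_pos _
  have hmneg : Z x0 t0 < 0 := by
    by_contra hcz
    push_neg at hcz
    have h2 : 0 ≤ Z x0 t0 * (3 - x0^2) * Real.exp (-(6*t0)) :=
      mul_nonneg (mul_nonneg hcz (le_of_lt hψpos)) (le_of_lt hEpos)
    have h3 : W (x0, t0) = Z x0 t0 * (3 - x0^2) * Real.exp (-(6*t0)) := rfl
    rw [h3] at hqneg
    linarith
  rcases eq_or_lt_of_le ht0.1 with h0 | ht0pos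
  · -- t0 = 0
    have hZ0 : Z x0 0 = u0 x0 - phif x0 - 1 + phif 1 := by
      show u x0 0 - phif x0 - (π/4)*0 - 1 + phif 1 + ε*0 = _
      rw [hinit x0 hx0]; ring
    have : 0 ≤ Z x0 0 := by
      rw [hZ0]
      have := hu0 x0 hx0
      have := phi_le hx0
      linarith
    rw [← h0] at hmneg
    linarith
  · -- t0 > 0
    have ht0Ioc : t0 ∈ Set.Ioc (0:ℝ) T := ⟨ht0pos, ht0.2⟩
    set E : ℝ := Real.exp (-(6*t0)) with hE
    let g : ℝ → ℝ := fun x => Z x t0 * (3 - x^2) * E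
    let G : ℝ → ℝ := fun x =>
      ((ux u x t0 - Real.tan (π*x/4)) * (3 - x^2) + Z x t0 * (-(2*x))) * E
    have hgW : ∀ x, g x = W (x, t0) := fun x => rfl
    have hgmin : ∀ x ∈ Set.Icc (-1:ℝ) 1, g x0 ≤ g x := by
      intro x hx
      rw [hgW, hgW]
      exact hqmin (x, t0) ⟨hx, ht0⟩
    have hgderiv : ∀ x ∈ Set.Ioo (-1:ℝ) 1, HasDerivAt g (G x) x := by
      intro x hx
      have hxI : x ∈ Set.Icc (-1:ℝ) 1 := Set.Ioo_subset_Icc_self hx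
      have hcos := cos_pos_aux hxI
      have hdx := (hpde t0 ht0Ioc x hx).1
      have h1 : HasDerivAt (fun y => u y t0) (ux u x t0) x := hdx.hasDerivAt
      have h2 : HasDerivAt phif (Real.tan (π*x/4)) x := phi_hasDerivAt hcos
      have hZd : HasDerivAt (fun y => Z y t0) (ux u x t0 - Real.tan (π*x/4)) x := by
        have h3 := ((((h1.sub h2).sub_const ((π/4)*t0)).sub_const 1).add_const
          (phif 1)).add_const (ε*t0)
        exact h3
      have hψd : HasDerivAt (fun y : ℝ => 3 - y^2) (-(2*x)) x := by
        simpa using (hasDerivAt_pow 2 x).const_sub 3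
      exact (hZd.mul hψd).mul_const E
    have hucont : ContinuousOn (fun x => u x t0) (Set.Icc (-1:ℝ) 1) :=
      hc.comp (continuous_id.prodMk continuous_const).continuousOn
        (fun x hx => ⟨hx, ht0⟩)
    have hZcont : ContinuousOn (fun x => Z x t0) (Set.Icc (-1:ℝ) 1) :=
      ((((hucont.sub hphic).sub continuousOn_const).sub continuousOn_const).add
        continuousOn_const).add continuousOn_const
    have hgcont : ContinuousOn g (Set.Icc (-1:ℝ) 1) :=
      (hZcont.mul ((continuous_const.sub (continuous_id.pow 2)).continuousOn)).mul
        continuousOn_const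
    have htancont : ContinuousOn (fun x => Real.tan (π*x/4)) (Set.Icc (-1:ℝ) 1) := fun x hx =>
      (tan_hasDerivAt (cos_pos_aux hx)).continuousAt.continuousWithinAt
    have huxcont : ContinuousOn (fun x => ux u x t0) (Set.Icc (-1:ℝ) 1) :=
      hcx.comp (continuous_id.prodMk continuous_const).continuousOn
        (fun x hx => ⟨hx, ht0⟩)
    have hGcont : ContinuousOn G (Set.Icc (-1:ℝ) 1) :=
      (((huxcont.sub htancont).mul
          ((continuous_const.sub (continuous_id.pow 2)).continuousOn)).add
        (hZcont.mul (((continuous_const.mul continuous_id).neg).continuousOn))).mul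
        continuousOn_const
    rcases eq_or_lt_of_le hx0.2 with hx1 | hx0lt
    · -- x0 = 1
      subst hx1
      have hG1 : G 1 ≤ 0 :=
        endpoint_right (by norm_num : (-1:ℝ) < 1) hgcont hGcont hgderiv hgmin
      have hbc1 := (hbc t0 ht0Ioc).1
      have hGval : G 1 = ((π/2) - 2*ε) * t0 * E := by
        show ((ux u 1 t0 - Real.tan (π*1/4)) * (3 - 1^2)
            + (u 1 t0 - phif 1 - (π/4)*t0 - 1 + phif 1 + ε*t0) * (-(2*1))) * E = _
        rw [hbc1, show π*1/4 = π/4 by ring, Real.tan_pi_div_four]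
        ring
      rw [hGval] at hG1
      nlinarith [mul_pos ht0pos hEpos]
    rcases eq_or_lt_of_le hx0.1 with hxm1 | hx0gt
    · -- x0 = -1
      subst hxm1
      have hGm1 : 0 ≤ G (-1) :=
        endpoint_left (by norm_num : (-1:ℝ) < 1) hgcont hGcont hgderiv hgmin
      have hbc2 := (hbc t0 ht0Ioc).2
      have hGval : G (-1) = (2*ε - (π/2)) * t0 * E := by
        show ((ux u (-1) t0 - Real.tan (π*(-1)/4)) * (3 - (-1:ℝ)^2)
            + (u (-1) t0 - phif (-1) - (π/4)*t0 - 1 + phif 1 + ε*t0) * (-(2*(-1)))) * E = _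
        rw [hbc2, show π*(-1)/4 = -(π/4) by ring, Real.tan_neg, Real.tan_pi_div_four,
          phi_symm]
        ring
      rw [hGval] at hGm1
      nlinarith [mul_pos ht0pos hEpos]
    · -- interior
      have hx0I : x0 ∈ Set.Ioo (-1:ℝ) 1 := ⟨hx0gt, hx0lt⟩
      obtain ⟨hdx, hdux, hdt, hpdeq⟩ := hpde t0 ht0Ioc x0 hx0I
      have hcos := cos_pos_aux hx0
      set p : ℝ := ux u x0 t0 with hp
      set P : ℝ := uxx u x0 t0 with hP
      set q : ℝ := Real.tan (π*x0/4) with hq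
      set m : ℝ := Z x0 t0 with hm
      -- (A) first derivative zero
      have hlocmin : IsLocalMin g x0 := by
        have hIccmem : Set.Icc (-1:ℝ) 1 ∈ nhds x0 := Icc_mem_nhds hx0gt hx0lt
        filter_upwards [hIccmem] with x hx
        exact hgmin x hx
      have hGx0 : G x0 = 0 := hlocmin.hasDerivAt_eq_zero (hgderiv x0 hx0I)
      have hEne : E ≠ 0 := ne_of_gt hEpos
      have e1 : (p - q) * (3 - x0^2) + m * (-(2*x0)) = 0 := by
        have := hGx0
        have h5 : ((p - q) * (3 - x0^2) + m * (-(2*x0))) * E = 0 := this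
        rcases mul_eq_zero.1 h5 with h | h
        · exact h
        · exact absurd h hEne
      -- (B) second derivative
      have hψd : HasDerivAt (fun y : ℝ => 3 - y^2) (-(2*x0)) x0 := by
        simpa using (hasDerivAt_pow 2 x0).const_sub 3
      have h1 : HasDerivAt (fun y => u y t0) p x0 := hdx.hasDerivAt
      have h2 : HasDerivAt phif q x0 := phi_hasDerivAt hcos
      have hZd : HasDerivAt (fun y => Z y t0) (p - q) x0 := by
        have h3 := ((((h1.sub h2).sub_const ((π/4)*t0)).sub_const 1).add_const
          (phif 1)).add_const (ε*t0)
        exact h3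
      have huxd : HasDerivAt (fun y => ux u y t0) P x0 := hdux.hasDerivAt
      have htand : HasDerivAt (fun y : ℝ => Real.tan (π*y/4)) ((π/4)*(1+q^2)) x0 :=
        tan_hasDerivAt hcos
      have hlind : HasDerivAt (fun y : ℝ => -(2*y)) (-2) x0 := by
        have h := ((hasDerivAt_id x0).const_mul 2).neg; simp only [id_eq, mul_one] at h; exact h
      have hGd : HasDerivAt G
          (((P - (π/4)*(1+q^2)) * (3 - x0^2) + (p - q)*(-(2*x0))*2 + m*(-2)) * E) x0 := by
        have h6 := (((huxd.sub htand).mul hψd).add ((hZd.mul hlind))).mul_const E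
        refine h6.congr_deriv ?_
        simp only [Pi.sub_apply]
        rw [hm, hp, hq]
        ring
      have hL : 0 ≤ ((P - (π/4)*(1+q^2)) * (3 - x0^2) + (p - q)*(-(2*x0))*2 + m*(-2)) * E :=
        second_deriv_nonneg hx0lt (hgcont.mono (Set.Icc_subset_Icc hx0.1 (le_refl 1)))
          (fun x hx => hgderiv x ⟨lt_trans hx0gt hx.1, hx.2⟩) hGd hGx0
          (fun x hx => hgmin x ⟨le_trans hx0.1 hx.1, hx.2⟩)
      have e2 : 0 ≤ (P - (π/4)*(1+q^2)) * (3 - x0^2) + (p - q)*(-(2*x0))*2 + m*(-2) := by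
        by_contra h
        push_neg at h
        nlinarith [mul_neg_of_neg_of_pos h hEpos]
      -- (C) time derivative
      let f : ℝ → ℝ := fun t => Z x0 t * (3 - x0^2) * Real.exp (-(6*t))
      have hfW : ∀ t, f t = W (x0, t) := fun t => rfl
      have hfmin : ∀ t ∈ Set.Ioo (0:ℝ) t0, f t0 ≤ f t := by
        intro t ht
        rw [hfW, hfW]
        exact hqmin (x0, t) ⟨hx0, ⟨le_of_lt ht.1, le_trans (le_of_lt ht.2) ht0.2⟩⟩
      have hut : HasDerivAt (fun s => u x0 s) (ut u x0 t0) t0 := hdt.hasDerivAt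
      have hZtd : HasDerivAt (fun t => Z x0 t) (ut u x0 t0 - π/4 + ε) t0 := by
        have hπ4 : HasDerivAt (fun t : ℝ => (π/4)*t) (π/4) t0 := by
          simpa using (hasDerivAt_id t0).const_mul (π/4)
        have hεt : HasDerivAt (fun t : ℝ => ε*t) ε t0 := by
          simpa using (hasDerivAt_id t0).const_mul ε
        have h7 := ((((hut.sub_const (phif x0)).sub hπ4).sub_const 1).add_const
          (phif 1)).add hεt
        exact h7
      have h8 : HasDerivAt (fun t : ℝ => -(6*t)) (-6) t0 := by
        have h := ((hasDerivAt_id t0).const_mul 6).neg; simp only [id_eq, mul_one] at h; exact h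
      have hexpd : HasDerivAt (fun t : ℝ => Real.exp (-(6*t)))
          (Real.exp (-(6*t0)) * (-6)) t0 := h8.exp
      have hfd : HasDerivAt f
          (((ut u x0 t0 - π/4 + ε) + m * (-6)) * ((3 - x0^2) * E)) t0 := by
        have h9 := (hZtd.mul_const (3 - x0^2)).mul hexpd
        refine h9.congr_deriv ?_
        rw [hE, hm]
        ring
      have hfL := deriv_nonpos_at_right_min ht0pos hfd hfmin
      have h5 : ut u x0 t0 - π/4 + ε - 6*m ≤ 0 := by
        have hψE : 0 < (3 - x0^2) * E := mul_pos hψpos hEpos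
        by_contra hcon5
        push_neg at hcon5
        have h5a : 0 < ((ut u x0 t0 - π/4 + ε) + m * (-6)) * ((3 - x0^2) * E) :=
          mul_pos (by linarith) hψE
        linarith
      -- algebra: contradiction
      have hp2 : (0:ℝ) < 1 + p^2 := by positivity
      have e3 : P ≤ (π/4 - ε + 6*m) * (1 + p^2) := by
        rw [hpdeq] at h5
        have h10 : P / (1 + p^2) ≤ π/4 - ε + 6*m := by linarith
        calc P = (P / (1 + p^2)) * (1 + p^2) := by field_simp
        _ ≤ (π/4 - ε + 6*m) * (1 + p^2) := by
            apply mul_le_mul_of_nonneg_right h10 (le_of_lt hp2)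
      have hqb := tan_bounds hx0
      have hq2 : q^2 ≤ 1 := by rw [hq]; nlinarith [hqb.1, hqb.2]
      have e1' : (p - q) * (3 - x0^2) = m * (2*x0) := by linarith [e1]
      exact interior_algebra P p q m x0 ε hx0sq hmneg hε hq2 e1' e2 e3

theorem stmt_4 (T : ℝ) (hT : 0 < T) (u0 : ℝ → ℝ)
    (hu0 : ∀ x ∈ Set.Icc (-1 : ℝ) 1, 1 ≤ u0 x)
    (u : ℝ → ℝ → ℝ) (hu : IsClassicalSolB u u0 T)
    (φ1 : ℝ → ℝ) (hφ1 : ∀ x : ℝ, φ1 x = -(4 / π) * Real.log (Real.cos (π * x / 4))) :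
    ∀ x ∈ Set.Icc (-1 : ℝ) 1, ∀ t ∈ Set.Icc (0 : ℝ) T,
      u x t ≥ φ1 x + (π / 4) * t + 1 - φ1 1 ∧
      u x t ≥ (π / 4) * t - ((2 / π) * Real.log 2 - 1) := by
  intro x hx t ht
  have hπ := Real.pi_pos
  have hkey : ∀ e : ℝ, 0 < e → e < π / 4 →
      0 ≤ u x t - phif x - (π/4)*t - 1 + phif 1 + e*t := by
    intro e h1 h2
    exact key T hT u0 hu0 u hu e h1 h2 x hx t ht
  have h1 : u x t ≥ phif x + (π/4)*t + 1 - phif 1 := by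
    by_contra h
    push_neg at h
    set D : ℝ := phif x + (π/4)*t + 1 - phif 1 - u x t with hD
    have hDpos : 0 < D := by rw [hD]; linarith
    have hepos : 0 < min (π/8) (D/(2*T)) := lt_min (by positivity) (by positivity)
    have helt : min (π/8) (D/(2*T)) < π/4 :=
      lt_of_le_of_lt (min_le_left _ _) (by linarith)
    have hk := hkey _ hepos helt
    have ht1 : min (π/8) (D/(2*T)) * t ≤ (D/(2*T)) * T := by
      apply mul_le_mul (min_le_right _ _) ht.2 ht.1 (by positivity)
    have ht2 : (D/(2*T)) * T = D/2 := by field_simp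
    have hk2 : 0 ≤ -D + (π / 8 ⊓ D / (2 * T)) * t := by rw [hD]; linarith [hk]
    linarith [hk2, ht1, ht2.le, ht2.ge, hDpos]
  have hphix : phif x = -(4 / π) * Real.log (Real.cos (π * x / 4)) := rfl
  have hphi1 : phif 1 = -(4 / π) * Real.log (Real.cos (π * 1 / 4)) := rfl
  constructor
  · rw [hφ1 x, hφ1 1]
    rw [hphix, hphi1] at h1
    linarith
  · have h2 := phi_nonneg hx
    have h3 := phi_one
    linarith [h1, h2, h3.le, h3.ge]
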